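/- For any Markovian policy with parameter q = π(a1|s) ∈ [0,1) on the single-state looping MDP with γ = 1, the occupancy satisfies μ_1^π(s,a1) = q/(1−q) and μ_1^π(s,a2) = 1. Consequently, no Markovian policy achieves the occupancy pair (μ(s,a1), μ(s,a2)) = (∞, 1/2), which is the occupancy of the non-Markovian policy that plays a1 or a2 uniformly at t=0 and a1 deterministically thereafter. -/
import Mathlib


open scoped ENNReal

/-!
Undiscounted (`γ = 1`) single-state MDP where `a1` loops and `a2` terminates.
A Markovian policy is parametrized by `q = π(a1|s)`; the trajectory survives `t`
steps with probability `q^t`, so its occupancies are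
`μ(s,a1) = ∑ₜ q^{t+1}` and `μ(s,a2) = ∑ₜ q^t (1−q)` (in `ℝ≥0∞`).
For `q < 1` these equal `q/(1−q)` and `1`. Consequently no Markovian policy
achieves the occupancy pair `(∞, 1/2)`, which is the occupancy of the
non-Markovian policy choosing uniformly between `a1, a2` at `t = 0` and playing
`a1` deterministically afterwards.
-/

theorem no_markovian_policy_matches_sigma_infinite_occupancy :
    (∀ q : ℝ≥0∞, q < 1 →
      (∑' t : ℕ, q ^ (t + 1)) = q / (1 - q) ∧
      (∑' t : ℕ, q ^ t * (1 - q)) = 1) ∧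
    ¬ ∃ q : ℝ≥0∞, q ≤ 1 ∧
      (∑' t : ℕ, q ^ (t + 1)) = ⊤ ∧ (∑' t : ℕ, q ^ t * (1 - q)) = 1 / 2 := by
  have key : ∀ q : ℝ≥0∞, q < 1 →
      (∑' t : ℕ, q ^ (t + 1)) = q / (1 - q) ∧
      (∑' t : ℕ, q ^ t * (1 - q)) = 1 := by
    intro q hq
    have h1 : (1 - q) ≠ 0 := by
      simp [tsub_eq_zero_iff_le, not_le, hq]
    have h2 : (1 - q) ≠ ⊤ := by
      exact ne_top_of_le_ne_top (by simp) tsub_le_self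
    constructor
    · calc (∑' t : ℕ, q ^ (t + 1)) = ∑' t : ℕ, q * q ^ t := by
            simp [pow_succ, mul_comm]
        _ = q * ∑' t : ℕ, q ^ t := ENNReal.tsum_mul_left
        _ = q * (1 - q)⁻¹ := by rw [ENNReal.tsum_geometric]
        _ = q / (1 - q) := rfl
    · calc (∑' t : ℕ, q ^ t * (1 - q)) = (∑' t : ℕ, q ^ t) * (1 - q) :=
            ENNReal.tsum_mul_right
        _ = (1 - q)⁻¹ * (1 - q) := by rw [ENNReal.tsum_geometric]
        _ = 1 := ENNReal.inv_mul_cancel h1 h2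
  refine ⟨key, ?_⟩
  rintro ⟨q, hq, htop, hhalf⟩
  rcases lt_or_eq_of_le hq with h | h
  · rw [(key q h).2] at hhalf
    exact absurd hhalf.symm (ne_of_lt (by rw [one_div]; exact ENNReal.one_half_lt_one))
  · subst h
    exact absurd hhalf.symm (by simp)
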